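/- Let S be a string in which the character σ occurs exactly ℓ ≥ 2 times, let e = ⌊ℓ/2⌋, let Y be an Algorithm-1 output for S and σ, and let Z be an Algorithm-2 output for S and σ built from Y. Then ZZ is a maximal square subsequence of S, and ZZ contains σ^{2e} as a subsequence. -/

import Mathlib

open List

variable {α : Type*}

/-- The substring of `S` from 1-indexed position `a` to position `b`, inclusive
(empty when `a > b`). -/
def substr (S : List α) (a b : ℕ) : List α := (S.drop (a - 1)).take (b + 1 - a)

/-- `X` is a square subsequence of `S`. -/
def IsSquareSubseq (S X : List α) : Prop := (∃ Y, X = Y ++ Y) ∧ X <+ S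

/-- `X` is a maximal square subsequence of `S`: it is a square subsequence of `S` and
is not a proper subsequence of any other square subsequence of `S`. -/
def IsMaxSquareSubseq (S X : List α) : Prop :=
  IsSquareSubseq S X ∧ ∀ X', IsSquareSubseq S X' → X <+ X' → X' = X

/-- The square subsequence `Y ++ Y` is right-extendable in `S`. -/
def RightExtendable (S Y : List α) : Prop := ∃ y : α, Y ++ [y] ++ Y ++ [y] <+ S

/-- The square subsequence `Y ++ Y` is left-extendable in `S`. -/
def LeftExtendable (S Y : List α) : Prop := ∃ y : α, [y] ++ Y ++ [y] ++ Y <+ S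

/-- The square subsequence `Y ++ Y` is inner-extendable in `S`. -/
def InnerExtendable (S Y : List α) : Prop :=
  ∃ (y : α) (Y₁ Y₂ : List α), Y = Y₁ ++ Y₂ ∧ Y₁ ≠ [] ∧ Y₂ ≠ [] ∧
    Y₁ ++ [y] ++ Y₂ ++ Y₁ ++ [y] ++ Y₂ <+ S

/-- `X` is a `k`-repeating subsequence of `S`: the `k`-fold concatenation of `X`
is a subsequence of `S`. -/
def IsKRep (k : ℕ) (S X : List α) : Prop := (List.replicate k X).flatten <+ S

/-- `X` is a maximal `k`-repeating subsequence of `S`: the only `k`-repeating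
subsequence of `S` having `X` as a subsequence is `X` itself. -/
def IsMaxKRep (k : ℕ) (S X : List α) : Prop :=
  IsKRep k S X ∧ ∀ Y, IsKRep k S Y → X <+ Y → Y = X

/-- A `σ`-split point for `A` and `B` in `S`: a strictly increasing `k`-tuple of
1-indexed positions of `S` carrying `σ`, such that around each position `p i` one
can place `A` immediately to its left and `B` immediately to its right within a
window `[a i, b i]`, with consecutive windows disjoint (`b i < a (i+1)`). -/
def IsSplitPoint (S : List α) (σ : α) (A B : List α) (k : ℕ) (p : Fin k → ℕ) : Prop :=
  StrictMono p ∧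
  (∀ i, 1 ≤ p i ∧ p i ≤ S.length ∧ substr S (p i) (p i) = [σ]) ∧
  ∃ a b : Fin k → ℕ,
    (∀ i, 1 ≤ a i ∧ a i ≤ p i ∧ p i ≤ b i ∧ b i ≤ S.length ∧
      A <+ substr S (a i) (p i - 1) ∧ B <+ substr S (p i + 1) (b i)) ∧
    ∀ i j : Fin k, (i : ℕ) + 1 = (j : ℕ) → b i < a j

/-- A `σ`-start for `σ^r` in `S`: a strictly increasing `k`-tuple of 1-indexed
positions of `S` carrying `σ`, such that (with `p (k+1) = |S| + 1`) the string
`σ^r` is a subsequence of `S[p j .. p (j+1) − 1]` for every `j`. -/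
def IsSigmaStart (S : List α) (σ : α) (r k : ℕ) (p : Fin k → ℕ) : Prop :=
  StrictMono p ∧
  (∀ i, 1 ≤ p i ∧ p i ≤ S.length ∧ substr S (p i) (p i) = [σ]) ∧
  ∀ i : Fin k, List.replicate r σ <+
    substr S (p i) ((if h : (i : ℕ) + 1 < k then p ⟨(i : ℕ) + 1, h⟩ else S.length + 1) - 1)

/-- `W` is a maximal common subsequence of `T₁` and `T₂` containing `X`. -/
def IsMCSContaining (T₁ T₂ X W : List α) : Prop :=
  X <+ W ∧ W <+ T₁ ∧ W <+ T₂ ∧ ∀ W', W <+ W' → W' <+ T₁ → W' <+ T₂ → W' = W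

/-- `p` is the 1-indexed position of the `t`-th occurrence (1-indexed `t`) of `σ` in `S`:
`S[p] = σ` and exactly `t - 1` occurrences of `σ` lie strictly before position `p`. -/
def NthOccPos [DecidableEq α] (S : List α) (σ : α) (t p : ℕ) : Prop :=
  1 ≤ p ∧ p ≤ S.length ∧ substr S p p = [σ] ∧ (substr S 1 (p - 1)).count σ = t - 1

/-- `j` is the leftmost anchor of `Y` with position `i` in `S`: the smallest index `j`
such that `Y` is a subsequence of `S[i..j]`. -/
def LeftmostAnchor (S Y : List α) (i j : ℕ) : Prop :=
  Y <+ substr S i j ∧ ∀ j', Y <+ substr S i j' → j ≤ j'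

/-- `Y` is an Algorithm-1 output for `S` and `σ` (Algorithm 1 of the paper), where
`ℓ = count σ S` and `e = ⌊ℓ/2⌋`. -/
def Alg1Output [DecidableEq α] (S : List α) (σ : α) (Y : List α) : Prop :=
  ∃ (i1 ie1 : ℕ) (Y₀ : List α),
    NthOccPos S σ 1 i1 ∧
    NthOccPos S σ (S.count σ / 2 + 1) ie1 ∧
    IsMCSContaining (substr S i1 (ie1 - 1)) (substr S ie1 S.length)
      (List.replicate (S.count σ / 2) σ) Y₀ ∧
    ((Y = Y₀ ∧ (Odd (S.count σ) → ∀ ie2, NthOccPos S σ (S.count σ / 2 + 2) ie2 →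
        ¬ Y₀ <+ substr S ie2 S.length)) ∨
     (Odd (S.count σ) ∧ ∃ ie2, NthOccPos S σ (S.count σ / 2 + 2) ie2 ∧
        Y₀ <+ substr S ie2 S.length ∧
        IsMCSContaining (substr S i1 (ie2 - 1)) (substr S ie2 S.length) Y₀ Y))

/-- `Z` is an Algorithm-2 output for `S` and `σ` built from the Algorithm-1 output `Y`
(Algorithm 2 of the paper). -/
def Alg2Output [DecidableEq α] (S : List α) (σ : α) (Y Z : List α) : Prop :=
  ∃ (i1 i2 j1 : ℕ) (Z₀ : List α),
    NthOccPos S σ 1 i1 ∧ NthOccPos S σ 2 i2 ∧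
    LeftmostAnchor S Y i1 j1 ∧
    IsMCSContaining (substr S 1 j1) (substr S (j1 + 1) S.length) Y Z₀ ∧
    ((Z = Z₀ ∧ (Odd (S.count σ) → ∀ j2, LeftmostAnchor S Y i2 j2 →
        ¬ Z₀ <+ substr S (j2 + 1) S.length)) ∨
     (Odd (S.count σ) ∧ ∃ j2, LeftmostAnchor S Y i2 j2 ∧
        Z₀ <+ substr S (j2 + 1) S.length ∧
        IsMCSContaining (substr S 1 j2) (substr S (j2 + 1) S.length) Z₀ Z))

theorem take_sub_take (S : List α) {m m' : ℕ} (h : m ≤ m') : S.take m <+ S.take m' := by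
  have := (S.take m').take_sublist m
  rwa [take_take, min_eq_left h] at this

theorem drop_sub_drop (S : List α) {m m' : ℕ} (h : m ≤ m') : S.drop m' <+ S.drop m := by
  have := (S.drop m).drop_sublist (m' - m)
  rwa [drop_drop, Nat.add_sub_cancel' h] at this

theorem headEqOfConsEq {a b : α} {l₁ l₂ : List α} (h : a :: l₁ = b :: l₂) : a = b := by
  simpa using congrArg (·.head?) h

theorem cons_sub_of_not_mem {a : α} {t G H : List α} (hG : a ∉ G)
    (h : a :: t <+ G ++ a :: H) : a :: t <+ a :: H := by
  rw [sublist_append_iff] at h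
  obtain ⟨x, y, hxy, hx, hy⟩ := h
  cases x with
  | nil => simpa [hxy] using hy
  | cons b x' =>
    exfalso; apply hG
    have hb : b = a := (headEqOfConsEq hxy).symm
    exact hb ▸ hx.subset ((mem_cons_self (a := b) (l := x')))

theorem lg_lemma [DecidableEq α] {a : α} {g h w₁ w₂ : List α} (hg : a ∉ g) (hw : a ∉ w₁)
    (hc : (g ++ a :: h).count a = (w₁ ++ a :: w₂).count a)
    (hs : g ++ a :: h <+ w₁ ++ a :: w₂) : g <+ w₁ ∧ a :: h <+ a :: w₂ := by
  rw [sublist_append_iff] at hs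
  obtain ⟨x, y, hxy, hx, hy⟩ := hs
  have hax : a ∉ x := fun hmem => hw (hx.subset hmem)
  rcases append_eq_append_iff.mp hxy.symm with ⟨k, hk1, hk2⟩ | ⟨c, hc1, hc2⟩
  · -- g = x ++ k, y = k ++ a :: h
    have hak : a ∉ k := fun hm => hg (hk1 ▸ mem_append_right x hm)
    rcases sublist_cons_iff.mp (hk2 ▸ hy) with hyw | ⟨y', hy1, hy2⟩
    · exfalso
      have h1 : (k ++ a :: h).count a ≤ w₂.count a := hyw.count_le a
      have h2 : (g ++ a :: h).count a = 1 + h.count a := by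
        simp [count_append, count_cons, count_eq_zero.mpr hg]; omega
      have h3 : (w₁ ++ a :: w₂).count a = 1 + w₂.count a := by
        simp [count_append, count_cons, count_eq_zero.mpr hw]; omega
      have h4 : (k ++ a :: h).count a = 1 + h.count a := by
        simp [count_append, count_cons, count_eq_zero.mpr hak]; omega
      omega
    · -- y = a :: y', so k = []
      have hknil : k = [] := by
        cases k with
        | nil => rfl
        | cons b k' =>
          exfalso; apply hak
          have hb : b = a := headEqOfConsEq hy1
          exact hb ▸ (mem_cons_self (a := b) (l := k'))
      subst hknil
      simp only [append_nil] at hk1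
      simp only [nil_append] at hy1 hk2
      exact ⟨hk1 ▸ hx, hy1 ▸ hy1 ▸ (hk2 ▸ hy)⟩
  · -- x = g ++ c, a :: h = c ++ y
    cases c with
    | nil =>
      simp only [append_nil] at hc1
      simp only [nil_append] at hc2
      exact ⟨hc1 ▸ hx, hc2 ▸ hy⟩
    | cons b c' =>
      exfalso; apply hax
      have hb : b = a := (headEqOfConsEq hc2).symm
      exact hc1 ▸ mem_append_right g (hb ▸ (mem_cons_self (a := b) (l := c')))

theorem ld_lemma [DecidableEq α] {a : α} {g h w₁ v₁ v₂ : List α}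
    (hg : a ∉ g) (hw : a ∉ w₁) (hv : a ∉ v₁)
    (hcv : v₂.count a = h.count a)
    (hs : g ++ a :: h <+ w₁ ++ a :: (v₁ ++ a :: v₂)) :
    (g <+ w₁ ∧ a :: h <+ a :: (v₁ ++ a :: v₂)) ∨ (g <+ w₁ ++ a :: v₁ ∧ a :: h <+ a :: v₂) := by
  rw [sublist_append_iff] at hs
  obtain ⟨x, y, hxy, hx, hy⟩ := hs
  have hax : a ∉ x := fun hmem => hw (hx.subset hmem)
  rcases append_eq_append_iff.mp hxy.symm with ⟨k, hk1, hk2⟩ | ⟨c, hc1, hc2⟩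
  · -- g = x ++ k, y = k ++ a :: h
    have hak : a ∉ k := fun hm => hg (hk1 ▸ mem_append_right x hm)
    rcases sublist_cons_iff.mp (hk2 ▸ hy) with hyw | ⟨y', hy1, hy2⟩
    · -- k ++ a :: h <+ v₁ ++ a :: v₂ : apply lg_lemma
      have hcnt : (k ++ a :: h).count a = (v₁ ++ a :: v₂).count a := by
        simp [count_append, count_cons, count_eq_zero.mpr hak, count_eq_zero.mpr hv]; omega
      obtain ⟨h1, h2⟩ := lg_lemma hak hv hcnt hyw
      right
      refine ⟨?_, h2⟩
      calc g = x ++ k := hk1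
        _ <+ w₁ ++ v₁ := hx.append h1
        _ <+ w₁ ++ a :: v₁ := (sublist_cons_self a v₁).append_left w₁
    · -- y = a :: y', so k = []
      have hknil : k = [] := by
        cases k with
        | nil => rfl
        | cons b k' =>
          exfalso; exact hak ((headEqOfConsEq hy1) ▸ (mem_cons_self (a := b) (l := k')))
      subst hknil
      simp only [append_nil] at hk1
      simp only [nil_append] at hy1 hk2
      refine Or.inl ⟨hk1 ▸ hx, ?_⟩
      rw [hk2] at hy; exact hy
  · cases c with
    | nil =>
      simp only [append_nil] at hc1
      simp only [nil_append] at hc2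
      exact Or.inl ⟨hc1 ▸ hx, hc2 ▸ hy⟩
    | cons b c' =>
      exfalso
      exact hax (hc1 ▸ mem_append_right g ((headEqOfConsEq hc2).symm ▸ (mem_cons_self (a := b) (l := c'))))

/-- Split an appended sublist at a cut point of the big list. -/
theorem split_of_append_sublist {X Y S : List α} (h : X ++ Y <+ S) :
    ∃ m, X <+ S.take m ∧ Y <+ S.drop m := by
  induction S generalizing X with
  | nil =>
    have := eq_nil_of_sublist_nil h
    have hX : X = [] := by simpa using congrArg (List.take X.length) this
    have hY : Y = [] := by
      rw [hX] at this; simpa using this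
    exact ⟨0, by simp [hX], by simp [hY]⟩
  | cons s S' ih =>
    cases X with
    | nil => exact ⟨0, by simp, by simpa using h⟩
    | cons x X' =>
      rcases sublist_cons_iff.mp (by simpa using h) with h' | ⟨r, hr1, hr2⟩
      · obtain ⟨m, hm1, hm2⟩ := ih (X := x :: X') (by simpa using h')
        exact ⟨m + 1, by simpa using hm1.cons s, by simpa using hm2⟩
      · have hx : x = s := headEqOfConsEq hr1
        have hr : X' ++ Y <+ S' := by
          have : r = X' ++ Y := by
            have := congrArg List.tail hr1; simpa using this.symm
          exact this ▸ hr2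
        obtain ⟨m, hm1, hm2⟩ := ih hr
        refine ⟨m + 1, ?_, by simpa using hm2⟩
        simpa [hx] using hm1.cons₂ s

/-- If `Z++Z` is a sublist of `W++W` then `Z` is a sublist of `W`. -/
theorem sub_of_sq_sub_sq {Z W : List α} (h : Z ++ Z <+ W ++ W) : Z <+ W := by
  rw [sublist_append_iff] at h
  obtain ⟨x, y, hxy, hx, hy⟩ := h
  rcases append_eq_append_iff.mp hxy.symm with ⟨k, hk1, hk2⟩ | ⟨c, hc1, hc2⟩
  · -- Z = x ++ k, y = k ++ Z : then Z <+ k ++ Z = y <+ W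
    have : Z <+ y := hk2 ▸ (sublist_append_right k Z)
    exact this.trans hy
  · -- x = Z ++ c : Z <+ x <+ W
    exact (hc1 ▸ sublist_append_left Z c).trans hx

/-- A proper sublist admits a one-character insertion still below the big list. -/
theorem exists_insertion {Z W : List α} (h : Z <+ W) (hne : Z ≠ W) :
    ∃ (y : α) (Z₁ Z₂ : List α), Z = Z₁ ++ Z₂ ∧ Z₁ ++ y :: Z₂ <+ W := by
  induction h with
  | slnil => exact absurd rfl hne
  | @cons Z' W' a h ih =>
    by_cases hz : Z' = W'
    · exact ⟨a, [], Z', by simp [hz]⟩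
    · obtain ⟨y, Z₁, Z₂, h1, h2⟩ := ih hz
      exact ⟨y, Z₁, Z₂, h1, h2.cons a⟩
  | @cons_cons Z' W' a h ih =>
    by_cases hz : Z' = W'
    · exact absurd (by rw [hz]) hne
    · obtain ⟨y, Z₁, Z₂, h1, h2⟩ := ih hz
      exact ⟨y, a :: Z₁, Z₂, by simp [h1], by simpa using h2.cons₂ a⟩

/-- Split a list at the first occurrence of a member. -/
theorem exists_first_split {a : α} {l : List α} (h : a ∈ l) :
    ∃ s t, l = s ++ a :: t ∧ a ∉ s := by
  induction l with
  | nil => cases h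
  | cons b l' ih =>
    by_cases hb : b = a
    · exact ⟨[], l', by simp [hb], by simp⟩
    · have : a ∈ l' := by
        rcases mem_cons.mp h with h' | h'
        · exact absurd h'.symm hb
        · exact h'
      obtain ⟨s, t, h1, h2⟩ := ih this
      exact ⟨b :: s, t, by simp [h1], by simp [h2]; exact fun hh => hb hh.symm⟩

theorem substr_one (S : List α) (j : ℕ) : substr S 1 j = S.take j := by
  simp [substr]

theorem substr_all (S : List α) (t : ℕ) : substr S t S.length = S.drop (t-1) := by
  simp only [substr]
  apply take_of_length_le
  rw [length_drop]; omega

theorem nthocc_count_take [DecidableEq α] {S : List α} {σ : α} {t p : ℕ}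
    (h : NthOccPos S σ t p) : (S.take (p-1)).count σ = t - 1 := by
  have h4 := h.2.2.2
  rwa [substr_one] at h4

theorem nthocc_drop [DecidableEq α] {S : List α} {σ : α} {t p : ℕ}
    (h : NthOccPos S σ t p) : S.drop (p-1) = σ :: S.drop p := by
  obtain ⟨h1, h2, h3, _⟩ := h
  have ht : (S.drop (p-1)).take 1 = [σ] := by
    have e1 : p + 1 - p = 1 := by omega
    simpa [substr, e1] using h3
  cases hd : S.drop (p-1) with
  | nil => rw [hd] at ht; simp at ht
  | cons b L =>
    rw [hd] at ht
    simp only [take_succ_cons, take_zero] at ht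
    have hb : b = σ := headEqOfConsEq ht
    have hL : S.drop p = L := by
      have e : S.drop p = (S.drop (p-1)).drop 1 := by rw [drop_drop]; congr 1; omega
      rw [e, hd, drop_one, tail_cons]
    rw [hL, hb]

theorem nthocc_count_take_self [DecidableEq α] {S : List α} {σ : α} {t p : ℕ}
    (h : NthOccPos S σ t p) (ht : 1 ≤ t) : (S.take p).count σ = t := by
  have h1 : 1 ≤ p := h.1
  have hadd := take_add (l := S) (i := p-1) (j := 1)
  rw [show p - 1 + 1 = p from by omega] at hadd
  rw [nthocc_drop h] at hadd
  rw [hadd, count_append, nthocc_count_take h]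
  simp; omega

theorem nthocc_lt [DecidableEq α] {S : List α} {σ : α} {t t' p p' : ℕ}
    (h : NthOccPos S σ t p) (h' : NthOccPos S σ t' p') (ht : 1 ≤ t) (htt : t < t') :
    p < p' := by
  by_contra hle
  have hmono : (S.take (p'-1)).count σ ≤ (S.take (p-1)).count σ :=
    (take_sub_take S (by omega)).count_le σ
  rw [nthocc_count_take h, nthocc_count_take h'] at hmono
  omega

theorem nthocc_unique [DecidableEq α] {S : List α} {σ : α} {t p p' : ℕ}
    (h : NthOccPos S σ t p) (h' : NthOccPos S σ t p') (ht : 1 ≤ t) : p = p' := by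
  by_contra hne
  rcases Nat.lt_or_ge p p' with hlt | hge
  · have hmono : (S.take p).count σ ≤ (S.take (p'-1)).count σ :=
      (take_sub_take S (by omega)).count_le σ
    rw [nthocc_count_take_self h ht, nthocc_count_take h'] at hmono; omega
  · have hmono : (S.take p').count σ ≤ (S.take (p-1)).count σ :=
      (take_sub_take S (by omega)).count_le σ
    rw [nthocc_count_take_self h' ht, nthocc_count_take h] at hmono; omega

theorem nthocc_exists [DecidableEq α] {S : List α} {σ : α} {t : ℕ}
    (h1 : 1 ≤ t) (h2 : t ≤ S.count σ) : ∃ p, NthOccPos S σ t p := by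
  classical
  have hex : ∃ m, t ≤ (S.take m).count σ := ⟨S.length, by simpa using h2⟩
  set p := Nat.find hex with hpdef
  have hp : t ≤ (S.take p).count σ := Nat.find_spec hex
  have hp1 : 1 ≤ p := by
    rcases Nat.eq_zero_or_pos p with h0 | h0
    · exfalso; rw [h0] at hp; simp at hp; omega
    · exact h0
  have hprev : (S.take (p-1)).count σ < t := by
    have := Nat.find_min hex (m := p - 1) (by omega)
    omega
  have hdecomp : S.take p = S.take (p-1) ++ (S.drop (p-1)).take 1 := by
    have := take_add (l := S) (i := p-1) (j := 1)
    rwa [show p - 1 + 1 = p from by omega] at this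
  have hcnt : (S.take p).count σ = (S.take (p-1)).count σ + ((S.drop (p-1)).take 1).count σ := by
    rw [hdecomp, count_append]
  have hle1 : ((S.drop (p-1)).take 1).count σ ≤ 1 := by
    calc ((S.drop (p-1)).take 1).count σ ≤ ((S.drop (p-1)).take 1).length :=
        count_le_length
      _ ≤ 1 := by rw [length_take]; omega
  have hc1 : ((S.drop (p-1)).take 1).count σ = 1 := by omega
  have hsig : (S.drop (p-1)).take 1 = [σ] := by
    cases hd : (S.drop (p-1)).take 1 with
    | nil => rw [hd] at hc1; simp at hc1
    | cons b L =>
      have hlen : (b :: L).length ≤ 1 := by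
        rw [← hd, length_take]; omega
      have hLnil : L = [] := by
        rw [length_cons] at hlen
        exact eq_nil_of_length_eq_zero (by omega)
      subst hLnil
      rw [hd] at hc1
      by_cases hbs : b = σ
      · rw [hbs]
      · rw [count_cons] at hc1; simp [hbs] at hc1
  have hplen : p ≤ S.length := by
    by_contra hbig
    have : S.drop (p-1) = [] := by
      apply drop_eq_nil_of_le; omega
    rw [this] at hsig; simp at hsig
  refine ⟨p, hp1, hplen, ?_, ?_⟩
  · show substr S p p = [σ]
    have e1 : p + 1 - p = 1 := by omega
    simpa [substr, e1] using hsig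
  · rw [substr_one]; omega

theorem substr_cons_occ [DecidableEq α] {S : List α} {σ : α} {t p : ℕ}
    (h : NthOccPos S σ t p) {j : ℕ} (hj : p ≤ j) :
    substr S p j = σ :: (S.drop p).take (j - p) := by
  simp only [substr]
  rw [show j + 1 - p = (j - p) + 1 from by omega, nthocc_drop h, take_succ_cons]

theorem take_eq_take_append_substr (S : List α) {t j : ℕ} (h1 : 1 ≤ t) (h2 : t - 1 ≤ j) :
    S.take j = S.take (t-1) ++ substr S t j := by
  have := take_add (l := S) (i := t-1) (j := j - (t-1))
  rw [show t - 1 + (j - (t-1)) = j from by omega] at this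
  rw [this]
  congr 1
  simp only [substr]
  congr 1
  omega

theorem substr_mono_left (S : List α) {t t' j : ℕ} (h1 : 1 ≤ t) (h : t ≤ t') :
    substr S t' j <+ substr S t j := by
  simp only [substr]
  have e : S.drop (t'-1) = (S.drop (t-1)).drop (t'-t) := by
    rw [drop_drop]; congr 1; omega
  rw [e]
  have := drop_sublist (t'-t) ((S.drop (t-1)).take (j+1-t))
  rw [drop_take] at this
  rwa [show j + 1 - t - (t'-t) = j + 1 - t' from by omega] at this

theorem substr_mono_right (S : List α) {t j j' : ℕ} (h : j ≤ j') :
    substr S t j <+ substr S t j' := by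
  simp only [substr]
  exact take_sub_take _ (by omega)

theorem drop_decomp [DecidableEq α] {S : List α} {σ : α} {t p : ℕ}
    (h : NthOccPos S σ t p) {m : ℕ} (hm : m ≤ p - 1) :
    S.drop m = (S.drop m).take (p-1-m) ++ σ :: S.drop p := by
  conv_lhs => rw [← take_append_drop (p-1-m) (S.drop m)]
  congr 1
  rw [drop_drop, show m + (p - 1 - m) = p - 1 from by omega]
  exact nthocc_drop h

theorem take_decomp [DecidableEq α] {S : List α} {σ : α} {t p : ℕ}
    (h : NthOccPos S σ t p) {m : ℕ} (hm : p ≤ m) :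
    S.take m = S.take (p-1) ++ σ :: (S.drop p).take (m - p) := by
  rw [take_eq_take_append_substr S (t := p) h.1 (by omega), substr_cons_occ h hm]

theorem seg_not_mem [DecidableEq α] {S : List α} {σ : α} {m m' : ℕ} (hm : m ≤ m')
    (hcnt : (S.take m).count σ = (S.take m').count σ) :
    σ ∉ (S.drop m).take (m' - m) := by
  have hadd := take_add (l := S) (i := m) (j := m' - m)
  rw [show m + (m' - m) = m' from by omega] at hadd
  have := congrArg (fun l => count σ l) hadd
  simp only [count_append] at this
  rw [← count_eq_zero]
  omega

theorem mcs_head {T₁ T₂ X W : List α} {σ : α}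
    (h : IsMCSContaining (σ :: T₁) (σ :: T₂) X W) : ∃ W', W = σ :: W' := by
  obtain ⟨hX, h1, h2, hmax⟩ := h
  cases W with
  | nil =>
    have := hmax [σ] (nil_sublist _) ((nil_sublist T₁).cons₂ σ) ((nil_sublist T₂).cons₂ σ)
    simp at this
  | cons w W' =>
    by_cases hw : w = σ
    · exact ⟨W', by rw [hw]⟩
    · exfalso
      have hW1 : w :: W' <+ T₁ := by
        rcases sublist_cons_iff.mp h1 with h' | ⟨r, hr1, hr2⟩
        · exact h'
        · exact absurd (headEqOfConsEq hr1) hw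
      have hW2 : w :: W' <+ T₂ := by
        rcases sublist_cons_iff.mp h2 with h' | ⟨r, hr1, hr2⟩
        · exact h'
        · exact absurd (headEqOfConsEq hr1) hw
      have := hmax (σ :: w :: W') (sublist_cons_self σ _) (hW1.cons₂ σ) (hW2.cons₂ σ)
      have hlen := congrArg length this
      simp at hlen

theorem anchor_ge {S Y : List α} {i j : ℕ} (h : Y <+ substr S i j) (hY : Y ≠ []) : i ≤ j := by
  by_contra hlt
  have hnil : substr S i j = [] := by
    simp only [substr]
    rw [show j + 1 - i = 0 from by omega, take_zero]
  rw [hnil] at h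
  exact hY (eq_nil_of_sublist_nil h)

theorem key_lemma [DecidableEq α] (S : List α) (σ : α)
    (hl2 : 2 ≤ S.count σ) (Y Z : List α)
    (hY : Alg1Output S σ Y) (hZ : Alg2Output S σ Y Z) (Z' : List α)
    (hsub : Z <+ Z') (hne : Z' ≠ Z)
    (m : ℕ) (hP : Z' <+ S.take m) (hQ : Z' <+ S.drop m) : False := by
  classical
  obtain ⟨i1a, ie1, Y₀, hi1a, hie1, hY0mcs, hYcase⟩ := hY
  obtain ⟨i1, i2, j1, Z₀, hi1, hi2, hj1, hZ0mcs, hZcase⟩ := hZ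
  obtain ⟨e, hedef⟩ : ∃ e, S.count σ / 2 = e := ⟨_, rfl⟩
  rw [hedef] at hie1 hY0mcs hYcase
  obtain ⟨l, hldef⟩ : ∃ l, S.count σ = l := ⟨_, rfl⟩
  rw [hldef] at hYcase hZcase hl2 hedef
  have he1 : 1 ≤ e := by omega
  have hi1eq : i1 = i1a := nthocc_unique hi1 hi1a (by omega)
  subst hi1eq
  -- basic position facts
  have hi1i2 : i1 < i2 := nthocc_lt hi1 hi2 (by omega) (by omega)
  have hi1ie1 : i1 < ie1 := nthocc_lt hi1 hie1 (by omega) (by omega)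
  have hi2ie1 : i2 ≤ ie1 := by
    rcases Nat.lt_or_ge 2 (e+1) with h' | h'
    · exact le_of_lt (nthocc_lt hi2 hie1 (by omega) h')
    · have : e + 1 = 2 := by omega
      exact le_of_eq (nthocc_unique hi2 (this ▸ hie1) (by omega))
  have hi1pos : 1 ≤ i1 := hi1.1
  have hi1len : i1 ≤ S.length := hi1.2.1
  have hi2pos : 1 ≤ i2 := hi2.1
  have hi2len : i2 ≤ S.length := hi2.2.1
  have hie1pos : 1 ≤ ie1 := hie1.1
  have hie1len : ie1 ≤ S.length := hie1.2.1
  -- count facts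
  have c_i1' : (S.take (i1-1)).count σ = 0 := by
    have := nthocc_count_take hi1; omega
  have c_i1 : (S.take i1).count σ = 1 := nthocc_count_take_self hi1 (by omega)
  have c_i2' : (S.take (i2-1)).count σ = 1 := by
    have := nthocc_count_take hi2; omega
  have c_i2 : (S.take i2).count σ = 2 := nthocc_count_take_self hi2 (by omega)
  have c_ie1' : (S.take (ie1-1)).count σ = e := by
    have := nthocc_count_take hie1; omega
  have c_ie1 : (S.take ie1).count σ = e + 1 := nthocc_count_take_self hie1 (by omega)
  have c_total : (S.take m).count σ + (S.drop m).count σ = l := by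
    rw [← count_append, take_append_drop]; exact hldef
  have c_take_le : ∀ k, (S.take k).count σ ≤ l := by
    intro k
    have := (S.take_sublist k).count_le σ; omega
  -- window head forms
  have hAform : substr S i1 (ie1-1) = σ :: (S.drop i1).take (ie1-1-i1) :=
    substr_cons_occ hi1 (by omega)
  have hBform : substr S ie1 S.length = σ :: S.drop ie1 := by
    rw [substr_all, nthocc_drop hie1]
  -- Y structure
  have hYhead : ∃ Yt, Y = σ :: Yt := by
    rcases hYcase with ⟨hYY0, _⟩ | ⟨hodd, ie2b, hie2b, hY0B', hYmcs⟩
    · subst hYY0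
      rw [hAform, hBform] at hY0mcs
      exact mcs_head hY0mcs
    · have hie2bie1 : ie1 < ie2b := nthocc_lt hie1 hie2b (by omega) (by omega)
      have hA'form : substr S i1 (ie2b-1) = σ :: (S.drop i1).take (ie2b-1-i1) :=
        substr_cons_occ hi1 (by omega)
      have hB'form : substr S ie2b S.length = σ :: S.drop ie2b := by
        rw [substr_all, nthocc_drop hie2b]
      rw [hA'form, hB'form] at hYmcs
      exact mcs_head hYmcs
  obtain ⟨Yt, hYt⟩ := hYhead
  have hYne : Y ≠ [] := by rw [hYt]; simp
  have hY0Y : Y₀ <+ Y := by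
    rcases hYcase with ⟨hYY0, _⟩ | ⟨_, _, _, _, hYmcs⟩
    · rw [hYY0]
    · exact hYmcs.1
  have hrepY : replicate e σ <+ Y := (hY0mcs.1).trans hY0Y
  have hcY_ge : e ≤ Y.count σ := by
    have := hrepY.count_le σ
    simpa using this
  -- Y <+ Z <+ Z'
  have hZ0Z : Z₀ <+ Z := by
    rcases hZcase with ⟨hZZ0, _⟩ | ⟨_, _, _, _, hZmcs⟩
    · rw [hZZ0]
    · exact hZmcs.1
  have hYZ : Y <+ Z := (hZ0mcs.1).trans hZ0Z
  have hYZ' : Y <+ Z' := hYZ.trans hsub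
  -- count of Z'
  have hcZ'_ge : e ≤ Z'.count σ := le_trans hcY_ge (hYZ'.count_le σ)
  have hcP_ge : e ≤ (S.take m).count σ := le_trans hcZ'_ge (hP.count_le σ)
  have hcQ_ge : e ≤ (S.drop m).count σ := le_trans hcZ'_ge (hQ.count_le σ)
  have hcZ' : Z'.count σ = e := by
    have h1 := hP.count_le σ
    have h2 := hQ.count_le σ
    omega
  -- split Z' at first σ
  have hσZ' : σ ∈ Z' := by
    have : 0 < Z'.count σ := by omega
    exact count_pos_iff.mp this
  obtain ⟨G, H, hZ'eq, hGfree⟩ := exists_first_split hσZ'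
  have hcH : H.count σ = e - 1 := by
    have := congrArg (fun w => count σ w) hZ'eq
    simp only [count_append, count_cons] at this
    rw [count_eq_zero.mpr hGfree] at this
    simp at this
    omega
  have hYσH : Y <+ σ :: H := by
    rw [hYt]
    exact cons_sub_of_not_mem hGfree (by rw [← hYt, ← hZ'eq]; exact hYZ')
  -- m bounds common
  have hi1m : i1 ≤ m := by
    by_contra hc
    have := (take_sub_take S (show m ≤ i1 - 1 by omega)).count_le σ
    omega
  -- FINISH-alpha: common final contradiction
  have finish_alpha : G <+ S.take (i1-1) → σ :: H = Y → σ :: H <+ substr S i1 m → False := by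
    intro hG1 hσHY hσHm
    have hYm : Y <+ substr S i1 m := hσHY ▸ hσHm
    have hj1m : j1 ≤ m := hj1.2 m hYm
    have hj1i1 : i1 ≤ j1 := anchor_ge hj1.1 hYne
    have hCs : Z' <+ substr S 1 j1 := by
      rw [substr_one, take_eq_take_append_substr S (t := i1) (by omega) (by omega),
        hZ'eq, hσHY]
      exact hG1.append hj1.1
    have hDs : Z' <+ substr S (j1+1) S.length := by
      rw [substr_all]
      simp only [Nat.add_sub_cancel]
      exact hQ.trans (drop_sub_drop S hj1m)
    have hZ'Z0 : Z' = Z₀ := hZ0mcs.2.2.2 Z' (hZ0Z.trans hsub) hCs hDs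
    have hZZ0 : Z = Z₀ := (hZ'Z0 ▸ hsub : Z <+ Z₀).antisymm hZ0Z
    exact hne (hZ'Z0.trans hZZ0.symm)
  rcases Nat.lt_or_ge ((S.take m).count σ) (e+1) with hcp | hcp
  · -- X1 : count σ (take m) = e
    have hcpe : (S.take m).count σ = e := by omega
    have hmie1 : m ≤ ie1 - 1 := by
      by_contra hc
      have := (take_sub_take S (show ie1 ≤ m by omega)).count_le σ
      omega
    have hdecP : S.take m = S.take (i1-1) ++ σ :: (S.drop i1).take (m - i1) :=
      take_decomp hi1 hi1m
    have hw1free : σ ∉ S.take (i1-1) := count_eq_zero.mp c_i1'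
    have hPL : G ++ σ :: H <+ S.take (i1-1) ++ σ :: (S.drop i1).take (m - i1) := by
      rw [← hdecP, ← hZ'eq]; exact hP
    have hcnteq : (G ++ σ :: H).count σ
        = (S.take (i1-1) ++ σ :: (S.drop i1).take (m-i1)).count σ := by
      rw [← hZ'eq, ← hdecP, hcZ', hcpe]
    obtain ⟨hG1, hσH1⟩ := lg_lemma hGfree hw1free hcnteq hPL
    have hσHm : σ :: H <+ substr S i1 m := by
      rw [substr_cons_occ hi1 hi1m]; exact hσH1
    have hσHA : σ :: H <+ substr S i1 (ie1-1) :=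
      hσHm.trans (substr_mono_right S (by omega))
    rcases Nat.lt_or_ge ((S.drop m).count σ) (e+1) with hcq2 | hcq2
    · -- second copy has e sigmas (even-type)
      have hcqe : (S.drop m).count σ = e := by omega
      have hdecQ : S.drop m = (S.drop m).take (ie1-1-m) ++ σ :: S.drop ie1 :=
        drop_decomp hie1 hmie1
      have hsegfree : σ ∉ (S.drop m).take (ie1-1-m) := seg_not_mem hmie1 (by omega)
      have hQL : G ++ σ :: H <+ (S.drop m).take (ie1-1-m) ++ σ :: S.drop ie1 := by
        rw [← hdecQ, ← hZ'eq]; exact hQ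
      have hcnteq2 : (G ++ σ :: H).count σ
          = ((S.drop m).take (ie1-1-m) ++ σ :: S.drop ie1).count σ := by
        rw [← hZ'eq, ← hdecQ, hcZ', hcqe]
      obtain ⟨-, hσHB⟩ := lg_lemma hGfree hsegfree hcnteq2 hQL
      have hσHBs : σ :: H <+ substr S ie1 S.length := by rw [hBform]; exact hσHB
      rcases hYcase with ⟨hYY0, -⟩ | ⟨hodd, -, -, -, -⟩
      · have hσHY : σ :: H = Y := by
          rw [hYY0]
          exact hY0mcs.2.2.2 _ (hYY0 ▸ hYσH) hσHA hσHBs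
        exact finish_alpha hG1 hσHY hσHm
      · rw [Nat.odd_iff] at hodd; omega
    · -- second copy has e+1 sigmas, l odd
      have hlodd : l = 2*e + 1 := by omega
      have hcqe : (S.drop m).count σ = e + 1 := by omega
      obtain ⟨ie2, hie2⟩ := nthocc_exists (S := S) (σ := σ) (t := e+2) (by omega) (by omega)
      have hie1ie2 : ie1 < ie2 := nthocc_lt hie1 hie2 (by omega) (by omega)
      have hie2pos : 1 ≤ ie2 := hie2.1
      have hie2len : ie2 ≤ S.length := hie2.2.1
      have c_ie2' : (S.take (ie2-1)).count σ = e+1 := by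
        have := nthocc_count_take hie2; omega
      have c_ie2 : (S.take ie2).count σ = e+2 := nthocc_count_take_self hie2 (by omega)
      have hB'form : substr S ie2 S.length = σ :: S.drop ie2 := by
        rw [substr_all, nthocc_drop hie2]
      have hdecQ2 : S.drop ie1 = (S.drop ie1).take (ie2-1-ie1) ++ σ :: S.drop ie2 :=
        drop_decomp hie2 (by omega)
      have hdecQ : S.drop m = (S.drop m).take (ie1-1-m)
          ++ σ :: ((S.drop ie1).take (ie2-1-ie1) ++ σ :: S.drop ie2) := by
        rw [← hdecQ2]
        exact drop_decomp hie1 hmie1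
      have hsegfree : σ ∉ (S.drop m).take (ie1-1-m) := seg_not_mem hmie1 (by omega)
      have hv1free : σ ∉ (S.drop ie1).take (ie2-1-ie1) := seg_not_mem (by omega) (by omega)
      have hcv : (S.drop ie2).count σ = H.count σ := by
        have hc1 : (S.take ie2).count σ + (S.drop ie2).count σ = l := by
          rw [← count_append, take_append_drop]; exact hldef
        omega
      have hQL : G ++ σ :: H <+ (S.drop m).take (ie1-1-m)
          ++ σ :: ((S.drop ie1).take (ie2-1-ie1) ++ σ :: S.drop ie2) := by
        rw [← hdecQ, ← hZ'eq]; exact hQ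
      rcases ld_lemma hGfree hsegfree hv1free hcv hQL with ⟨-, hσHB⟩ | ⟨-, hσHB'⟩
      · -- sigma H fits in B
        have hσHBs : σ :: H <+ substr S ie1 S.length := by
          rw [hBform, hdecQ2]; exact hσHB
        rcases hYcase with ⟨hYY0, -⟩ | ⟨hodd, ie2b, hie2b, hY0B', hYmcs⟩
        · have hσHY : σ :: H = Y := by
            rw [hYY0]
            exact hY0mcs.2.2.2 _ (hYY0 ▸ hYσH) hσHA hσHBs
          exact finish_alpha hG1 hσHY hσHm
        · have hσHY0 : σ :: H = Y₀ := hY0mcs.2.2.2 _ (hY0Y.trans hYσH) hσHA hσHBs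
          have hYY0' : Y = Y₀ := (hσHY0 ▸ hYσH : Y <+ Y₀).antisymm hY0Y
          exact finish_alpha hG1 (hσHY0.trans hYY0'.symm) hσHm
      · -- sigma H fits in B'
        have hσHBs' : σ :: H <+ substr S ie2 S.length := by
          rw [hB'form]; exact hσHB'
        have hYB' : Y <+ substr S ie2 S.length := hYσH.trans hσHBs'
        rcases hYcase with ⟨hYY0, hN1⟩ | ⟨hodd, ie2b, hie2b, hY0B', hYmcs⟩
        · exact hN1 (Nat.odd_iff.mpr (by omega)) ie2 hie2 (hYY0 ▸ hYB')
        · have hie2beq : ie2b = ie2 := nthocc_unique hie2b hie2 (by omega)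
          rw [hie2beq] at hYmcs
          have hσHA' : σ :: H <+ substr S i1 (ie2-1) :=
            hσHm.trans (substr_mono_right S (by omega))
          have hσHY : σ :: H = Y := hYmcs.2.2.2 _ hYσH hσHA' hσHBs'
          exact finish_alpha hG1 hσHY hσHm
  · -- X2 : count σ (take m) = e+1, l odd
    have hlodd : l = 2*e + 1 := by omega
    have hcpe : (S.take m).count σ = e+1 := by omega
    have hcqe : (S.drop m).count σ = e := by omega
    obtain ⟨ie2, hie2⟩ := nthocc_exists (S := S) (σ := σ) (t := e+2) (by omega) (by omega)
    have hie1ie2 : ie1 < ie2 := nthocc_lt hie1 hie2 (by omega) (by omega)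
    have hie2pos : 1 ≤ ie2 := hie2.1
    have hie2len : ie2 ≤ S.length := hie2.2.1
    have c_ie2' : (S.take (ie2-1)).count σ = e+1 := by
      have := nthocc_count_take hie2; omega
    have c_ie2 : (S.take ie2).count σ = e+2 := nthocc_count_take_self hie2 (by omega)
    have hi2m : i2 ≤ m := by
      by_contra hc
      have := (take_sub_take S (show m ≤ i2-1 by omega)).count_le σ; omega
    have hmie2 : m ≤ ie2 - 1 := by
      by_contra hc
      have := (take_sub_take S (show ie2 ≤ m by omega)).count_le σ; omega
    have hie1m : ie1 ≤ m := by
      by_contra hc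
      have := (take_sub_take S (show m ≤ ie1-1 by omega)).count_le σ; omega
    -- first copy: double decomposition of take m
    have hsplit2 : (S.drop i1).take (m - i1)
        = (S.drop i1).take (i2-1-i1) ++ σ :: (S.drop i2).take (m - i2) := by
      have h1 := take_add (l := S.drop i1) (i := i2-1-i1) (j := (m-i1)-(i2-1-i1))
      rw [show i2-1-i1 + ((m-i1)-(i2-1-i1)) = m - i1 from by omega] at h1
      rw [h1]
      congr 1
      rw [drop_drop, show i1 + (i2-1-i1) = i2 - 1 from by omega, nthocc_drop hi2,
        show m - i1 - (i2-1-i1) = (m - i2) + 1 from by omega, take_succ_cons]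
    have hdecP : S.take m = S.take (i1-1)
        ++ σ :: ((S.drop i1).take (i2-1-i1) ++ σ :: (S.drop i2).take (m-i2)) := by
      rw [take_decomp hi1 hi1m, hsplit2]
    have hw1free : σ ∉ S.take (i1-1) := count_eq_zero.mp c_i1'
    have hv1free : σ ∉ (S.drop i1).take (i2-1-i1) := seg_not_mem (by omega) (by omega)
    have hcv : ((S.drop i2).take (m-i2)).count σ = H.count σ := by
      have hcnt := congrArg (fun w => count σ w) hdecP
      simp only [count_append, count_cons_self,
        count_eq_zero.mpr hw1free, count_eq_zero.mpr hv1free] at hcnt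
      omega
    have hPL : G ++ σ :: H <+ S.take (i1-1)
        ++ σ :: ((S.drop i1).take (i2-1-i1) ++ σ :: (S.drop i2).take (m-i2)) := by
      rw [← hdecP, ← hZ'eq]; exact hP
    -- second copy Lg at ie2
    have hdecQ : S.drop m = (S.drop m).take (ie2-1-m) ++ σ :: S.drop ie2 :=
      drop_decomp hie2 hmie2
    have hsegfree : σ ∉ (S.drop m).take (ie2-1-m) := seg_not_mem hmie2 (by omega)
    have hQL : G ++ σ :: H <+ (S.drop m).take (ie2-1-m) ++ σ :: S.drop ie2 := by
      rw [← hdecQ, ← hZ'eq]; exact hQ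
    have hcnteq2 : (G ++ σ :: H).count σ
        = ((S.drop m).take (ie2-1-m) ++ σ :: S.drop ie2).count σ := by
      rw [← hZ'eq, ← hdecQ, hcZ', hcqe]
    obtain ⟨-, hσHB2⟩ := lg_lemma hGfree hsegfree hcnteq2 hQL
    have hB'form : substr S ie2 S.length = σ :: S.drop ie2 := by
      rw [substr_all, nthocc_drop hie2]
    have hσHBs' : σ :: H <+ substr S ie2 S.length := by rw [hB'form]; exact hσHB2
    have hYB' : Y <+ substr S ie2 S.length := hYσH.trans hσHBs'
    rcases hYcase with ⟨hYY0, hN1⟩ | ⟨hodd, ie2b, hie2b, hY0B', hYmcs⟩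
    · exact hN1 (Nat.odd_iff.mpr (by omega)) ie2 hie2 (hYY0 ▸ hYB')
    · have hie2beq : ie2b = ie2 := nthocc_unique hie2b hie2 (by omega)
      rw [hie2beq] at hYmcs
      rcases ld_lemma hGfree hw1free hv1free hcv hPL with ⟨hG1, hσHal⟩ | ⟨hGbeta, hσHbe⟩
      · -- alpha
        have hσHm : σ :: H <+ substr S i1 m := by
          rw [substr_cons_occ hi1 hi1m, hsplit2]; exact hσHal
        have hσHA' : σ :: H <+ substr S i1 (ie2-1) :=
          hσHm.trans (substr_mono_right S (by omega))
        have hσHY : σ :: H = Y := hYmcs.2.2.2 _ hYσH hσHA' hσHBs'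
        exact finish_alpha hG1 hσHY hσHm
      · -- beta
        have hσHi2m : σ :: H <+ substr S i2 m := by
          rw [substr_cons_occ hi2 hi2m]; exact hσHbe
        have hσHA' : σ :: H <+ substr S i1 (ie2-1) :=
          (hσHi2m.trans (substr_mono_right S (by omega))).trans
            (substr_mono_left S (by omega) (le_of_lt hi1i2))
        have hσHY : σ :: H = Y := hYmcs.2.2.2 _ hYσH hσHA' hσHBs'
        have hYi2m : Y <+ substr S i2 m := hσHY ▸ hσHi2m
        have hGi2 : G <+ S.take (i2-1) := by
          rw [take_decomp hi1 (show i1 ≤ i2 - 1 by omega)]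
          exact hGbeta
        rcases hZcase with ⟨hZZ0, hN2⟩ | ⟨hodd2, j2, hj2anchor, hZ0D', hZmcs⟩
        · -- 2a : construct the minimal anchor from i2
          have hex : ∃ j, Y <+ substr S i2 j := ⟨m, hYi2m⟩
          have hspec : Y <+ substr S i2 (Nat.find hex) := Nat.find_spec hex
          have hmin : ∀ j', Y <+ substr S i2 j' → Nat.find hex ≤ j' :=
            fun j' hj' => Nat.find_min' hex hj'
          have hanch : LeftmostAnchor S Y i2 (Nat.find hex) := ⟨hspec, hmin⟩
          have hj2'm : Nat.find hex ≤ m := hmin m hYi2m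
          have hZD : Z₀ <+ substr S (Nat.find hex + 1) S.length := by
            rw [substr_all]
            simp only [Nat.add_sub_cancel]
            exact (hZZ0 ▸ (hsub.trans (hQ.trans (drop_sub_drop S hj2'm))))
          exact hN2 (Nat.odd_iff.mpr (by omega)) (Nat.find hex) hanch hZD
        · -- 2b
          have hj2m : j2 ≤ m := hj2anchor.2 m hYi2m
          have hj2i2 : i2 ≤ j2 := anchor_ge hj2anchor.1 hYne
          have hC' : Z' <+ substr S 1 j2 := by
            rw [substr_one, take_eq_take_append_substr S (t := i2) (by omega) (by omega),
              hZ'eq, hσHY]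
            exact hGi2.append hj2anchor.1
          have hD' : Z' <+ substr S (j2+1) S.length := by
            rw [substr_all]
            simp only [Nat.add_sub_cancel]
            exact hQ.trans (drop_sub_drop S hj2m)
          exact hne (hZmcs.2.2.2 Z' hsub hC' hD')

theorem alg2_final {α : Type*} [DecidableEq α] (S : List α) (σ : α)
    (hℓ : 2 ≤ S.count σ) (Y Z : List α)
    (hY : Alg1Output S σ Y) (hZ : Alg2Output S σ Y Z) :
    IsMaxSquareSubseq S (Z ++ Z) ∧
      List.replicate (2 * (S.count σ / 2)) σ <+ Z ++ Z := by
  classical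
  obtain ⟨i1, i2, j1, Z₀, hi1, hi2, hj1, hZ0mcs, hZcase⟩ := id hZ
  have hZsplit : ∃ j, Z <+ S.take j ∧ Z <+ S.drop j := by
    rcases hZcase with ⟨hZZ0, -⟩ | ⟨-, j2, hj2, hZ0D', hZmcs⟩
    · refine ⟨j1, ?_, ?_⟩
      · have := hZ0mcs.2.1; rw [substr_one] at this; rw [hZZ0]; exact this
      · have := hZ0mcs.2.2.1; rw [substr_all] at this
        simp only [Nat.add_sub_cancel] at this
        rw [hZZ0]; exact this
    · refine ⟨j2, ?_, ?_⟩
      · have := hZmcs.2.1; rwa [substr_one] at this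
      · have := hZmcs.2.2.1; rw [substr_all] at this
        simpa using this
  obtain ⟨j, hZC, hZD⟩ := hZsplit
  have hZZS : Z ++ Z <+ S := by
    have := hZC.append hZD
    rwa [take_append_drop] at this
  have hrepZ : List.replicate (S.count σ / 2) σ <+ Z := by
    obtain ⟨i1a, ie1, Y₀, hi1a, hie1, hY0mcs, hYcase⟩ := id hY
    have hY0Y : Y₀ <+ Y := by
      rcases hYcase with ⟨h, -⟩ | ⟨-, ie2x, -, -, hm⟩
      · rw [h]
      · exact hm.1
    have hZ0Z : Z₀ <+ Z := by
      rcases hZcase with ⟨h, -⟩ | ⟨-, j2x, -, -, hm⟩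
      · rw [h]
      · exact hm.1
    exact ((hY0mcs.1.trans hY0Y).trans hZ0mcs.1).trans hZ0Z
  have hrep2 : List.replicate (2 * (S.count σ / 2)) σ <+ Z ++ Z := by
    rw [two_mul, replicate_add]
    exact hrepZ.append hrepZ
  refine ⟨⟨⟨⟨Z, rfl⟩, hZZS⟩, ?_⟩, hrep2⟩
  rintro X' ⟨⟨W, rfl⟩, hX'S⟩ hsubX
  have hZW : Z <+ W := sub_of_sq_sub_sq hsubX
  by_cases hWZ : W = Z
  · rw [hWZ]
  · exfalso
    obtain ⟨y, Z₁, Z₂, hZeq, hins⟩ := exists_insertion hZW (Ne.symm hWZ)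
    have hZZ' : Z <+ Z₁ ++ y :: Z₂ := by
      rw [hZeq]
      exact (sublist_cons_self y Z₂).append_left Z₁
    have hne : Z₁ ++ y :: Z₂ ≠ Z := by
      intro h
      have := congrArg length (h.trans hZeq)
      simp at this
    have hsq : (Z₁ ++ y :: Z₂) ++ (Z₁ ++ y :: Z₂) <+ S := (hins.append hins).trans hX'S
    obtain ⟨m, hm1, hm2⟩ := split_of_append_sublist hsq
    exact key_lemma S σ hℓ Y Z hY hZ (Z₁ ++ y :: Z₂) hZZ' hne m hm1 hm2

/-- If `σ` occurs exactly `ℓ ≥ 2` times in `S`, `e = ⌊ℓ/2⌋`, `Y` is an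
Algorithm-1 output and `Z` an Algorithm-2 output built from `Y`, then `ZZ` is a maximal
square subsequence of `S` containing `σ^(2e)` as a subsequence. -/
theorem alg2_output_maximal_square {α : Type*} [DecidableEq α] (S : List α) (σ : α)
    (hℓ : 2 ≤ S.count σ) (Y Z : List α)
    (hY : Alg1Output S σ Y) (hZ : Alg2Output S σ Y Z) :
    IsMaxSquareSubseq S (Z ++ Z) ∧
      List.replicate (2 * (S.count σ / 2)) σ <+ Z ++ Z := by
  exact alg2_final S σ hℓ Y Z hY hZ
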